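/- Let T be a binary tree and let w(T) := {σ ∈ List ℕ : v(σ) ∈ T} be its translation. Then w(T) is a tree on ℕ; for every q : ℕ → Bool with infinitely many ones, q ∈ [T] if and only if w(q) ∈ [w(T)]; and for every p : ℕ → ℕ, p ∈ [w(T)] if and only if v(p) ∈ [T]. -/

import Mathlib

/-- A tree (over an alphabet `α`) is a nonempty set of finite sequences closed under
taking prefixes. -/
def IsTree {α : Type*} (T : Set (List α)) : Prop :=
  T.Nonempty ∧ ∀ σ ∈ T, ∀ τ : List α, τ <+: σ → τ ∈ T

/-- The body of a tree: the set of infinite sequences all of whose finite initial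
segments belong to `T`. -/
def body {α : Type*} (T : Set (List α)) : Set (ℕ → α) :=
  {f | ∀ n : ℕ, List.ofFn (fun i : Fin n => f i) ∈ T}

/-- The translation of a finite sequence `σ = ⟨σ 0, …, σ (n-1)⟩ ∈ List ℕ` to the binary
sequence `0^{σ 0} 1 0^{σ 1} 1 ⋯ 0^{σ (n-1)} 1 ∈ List Bool`. -/
def vList : List ℕ → List Bool
  | [] => []
  | n :: σ => List.replicate n false ++ true :: vList σ

open Classical in
/-- The translation `v : (ℕ → ℕ) → (ℕ → Bool)` mapping `p` to the binary sequence
`0^{p 0} 1 0^{p 1} 1 0^{p 2} 1 ⋯`; that is, `v p k = true` iff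
`k = p 0 + p 1 + ⋯ + p m + m` for some `m`. -/
noncomputable def vSeq (p : ℕ → ℕ) : ℕ → Bool :=
  fun k => decide (∃ m : ℕ, k = (Finset.range (m + 1)).sum p + m)

/-- The translation `w : (ℕ → Bool) → (ℕ → ℕ)`: for `q` with infinitely many ones,
`w q` is the unique `p` with `v p = q`. -/
noncomputable def wSeq (q : ℕ → Bool) : ℕ → ℕ
  | 0 => Nat.nth (fun k => q k = true) 0
  | n + 1 => Nat.nth (fun k => q k = true) (n + 1) - Nat.nth (fun k => q k = true) n - 1

lemma vList_append (σ τ : List ℕ) : vList (σ ++ τ) = vList σ ++ vList τ := by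
  induction σ with
  | nil => rfl
  | cons a σ ih => simp [vList, ih]

def sF (p : ℕ → ℕ) (n : ℕ) : ℕ := (Finset.range n).sum p + n

lemma sF_succ (p n) : sF p (n + 1) = sF p n + p n + 1 := by
  simp [sF, Finset.sum_range_succ]; ring

lemma sF_mono (p : ℕ → ℕ) : StrictMono (sF p) :=
  strictMono_nat_of_lt_succ fun n => by rw [sF_succ]; omega

lemma vSeq_iff (p k) : vSeq p k = true ↔ ∃ m, k + 1 = sF p (m + 1) := by
  simp only [vSeq, decide_eq_true_eq]
  exact exists_congr fun m => by rw [sF]; omega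

lemma vSeq_interval (p : ℕ → ℕ) (n k : ℕ) (h1 : sF p n ≤ k) (h2 : k < sF p (n + 1)) :
    vSeq p k = decide (k + 1 = sF p (n + 1)) := by
  rcases eq_or_ne (k + 1) (sF p (n + 1)) with h | h
  · rw [decide_eq_true h]
    exact (vSeq_iff p k).mpr ⟨n, h⟩
  · rw [decide_eq_false h, Bool.eq_false_iff]
    intro hc
    obtain ⟨m, hm⟩ := (vSeq_iff p k).mp hc
    have h3 : sF p n < sF p (m + 1) := by omega
    have h4 : sF p (m + 1) ≤ sF p (n + 1) := by omega
    have := (sF_mono p).lt_iff_lt.mp h3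
    have := ((sF_mono p).le_iff_le).mp h4
    have hmn : m = n := by omega
    subst hmn
    exact h hm

lemma ofFn_nat_eq {α : Type*} (g : ℕ → α) {m n : ℕ} (h : m = n) :
    List.ofFn (fun i : Fin m => g i) = List.ofFn (fun i : Fin n => g i) := by subst h; rfl

lemma ofFn_nat_add {α : Type*} (g : ℕ → α) (m n : ℕ) :
    List.ofFn (fun i : Fin (m + n) => g i) =
      List.ofFn (fun i : Fin m => g i) ++ List.ofFn (fun j : Fin n => g (m + j)) := by
  rw [List.ofFn_add]; rfl

lemma vList_ofFn (p : ℕ → ℕ) (n : ℕ) :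
    vList (List.ofFn fun i : Fin n => p i) = List.ofFn (fun k : Fin (sF p n) => vSeq p k) := by
  induction n with
  | zero => simp [sF, vList]
  | succ n ih =>
    have e1 : List.ofFn (fun i : Fin (n + 1) => p i) =
        (List.ofFn fun i : Fin n => p i) ++ List.ofFn (fun j : Fin 1 => p (n + ↑j)) :=
      ofFn_nat_add p n 1
    have e2 : List.ofFn (fun k : Fin (sF p (n + 1)) => vSeq p k) =
        List.ofFn (fun k : Fin (sF p n + (p n + 1)) => vSeq p k) :=
      ofFn_nat_eq (vSeq p) (by rw [sF_succ]; ring)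
    have e3 := ofFn_nat_add (vSeq p) (sF p n) (p n + 1)
    rw [e1, e2, e3, vList_append, ← ih]
    congr 1
    have h1 : List.ofFn (fun j : Fin 1 => p (n + ↑j)) = [p n] := by simp
    rw [h1]
    show vList [p n] = _
    have hv : ∀ j : Fin (p n + 1), vSeq p (sF p n + ↑j) = decide ((↑j : ℕ) = p n) := by
      intro j
      have hj := j.isLt
      rw [vSeq_interval p n _ (by omega) (by rw [sF_succ]; omega), sF_succ, decide_eq_decide]
      omega
    simp only [hv]
    apply List.ext_getElem
    · simp [vList]
    · intro i hi hi'
      simp only [vList, List.getElem_ofFn]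
      simp only [vList, List.length_append, List.length_replicate, List.length_cons] at hi
      simp only [List.length_ofFn] at hi'
      rcases lt_or_ge i (p n) with h | h
      · rw [List.getElem_append_left (by simpa using h)]
        simp only [List.getElem_replicate]
        symm
        simp only [decide_eq_false_iff_not]
        omega
      · have : i = p n := by omega
        subst this
        rw [List.getElem_append_right (by simp)]
        simp

lemma ofFn_prefix {α : Type*} (g : ℕ → α) {m n : ℕ} (h : m ≤ n) :
    List.ofFn (fun i : Fin m => g i) <+: List.ofFn (fun i : Fin n => g i) := by
  obtain ⟨d, rfl⟩ := Nat.exists_eq_add_of_le h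
  rw [ofFn_nat_add]
  exact List.prefix_append _ _


/-- For a binary tree `T`, its translation `w T = {σ : List ℕ | v σ ∈ T}` is a tree on `ℕ`;
for every `q` with infinitely many ones, `q ∈ [T]` iff `w q ∈ [w T]`; and for every `p`,
`p ∈ [w T]` iff `v p ∈ [T]`. -/
theorem baireTranslation_spec {T : Set (List Bool)} (hT : IsTree T) :
    IsTree {σ : List ℕ | vList σ ∈ T} ∧
    (∀ q : ℕ → Bool, (∀ N : ℕ, ∃ k ≥ N, q k = true) →
      (q ∈ body T ↔ wSeq q ∈ body {σ : List ℕ | vList σ ∈ T})) ∧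
    (∀ p : ℕ → ℕ, p ∈ body {σ : List ℕ | vList σ ∈ T} ↔ vSeq p ∈ body T) := by
  have hnil : [] ∈ T := by
    obtain ⟨σ, hσ⟩ := hT.1
    exact hT.2 σ hσ [] (List.nil_prefix)
  have part3 : ∀ p : ℕ → ℕ, p ∈ body {σ : List ℕ | vList σ ∈ T} ↔ vSeq p ∈ body T := by
    intro p
    constructor
    · intro hp m
      have h1 : vList (List.ofFn fun i : Fin m => p i) ∈ T := hp m
      rw [vList_ofFn] at h1
      refine hT.2 _ h1 _ (ofFn_prefix (vSeq p) ?_)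
      simp only [sF]
      omega
    · intro hp n
      show vList _ ∈ T
      rw [vList_ofFn]
      exact hp _
  refine ⟨⟨⟨[], show vList [] ∈ T from hnil⟩, ?_⟩, ?_, part3⟩
  · rintro σ hσ τ ⟨ρ, rfl⟩
    exact hT.2 _ hσ _ ⟨vList ρ, (vList_append τ ρ).symm⟩
  · intro q hq
    set P : ℕ → Prop := fun k => q k = true with hPdef
    have hP : (setOf P).Infinite := by
      apply Set.infinite_of_not_bddAbove
      rintro ⟨b, hb⟩
      obtain ⟨k, hk1, hk2⟩ := hq (b + 1)
      exact absurd (hb hk2) (by omega)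
    have hnth : ∀ n, sF (wSeq q) (n + 1) = Nat.nth P n + 1 := by
      intro n
      induction n with
      | zero => simp [sF, wSeq]; rfl
      | succ n ih =>
        have hlt : Nat.nth P n < Nat.nth P (n + 1) :=
          (Nat.nth_lt_nth hP).mpr (by omega)
        rw [sF_succ, ih]
        show Nat.nth P n + 1 + (Nat.nth P (n + 1) - Nat.nth P n - 1) + 1 = _
        omega
    have hvw : vSeq (wSeq q) = q := by
      funext k
      rcases Bool.eq_false_or_eq_true (q k) with hk | hk
      · rw [hk]
        refine (vSeq_iff _ k).mpr ⟨Nat.count P k, ?_⟩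
        rw [hnth, Nat.nth_count hk]
      · rw [hk, Bool.eq_false_iff]
        intro hc
        obtain ⟨m, hm⟩ := (vSeq_iff _ k).mp hc
        rw [hnth] at hm
        have h1 : q (Nat.nth P m) = true := Nat.nth_mem_of_infinite hP m
        have h2 : k = Nat.nth P m := by omega
        rw [h2, h1] at hk
        cases hk
    rw [part3 (wSeq q), hvw]
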